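/- For any bounded operator a on H and nonnegative integers M, N, the adjoint satisfies ‖a*‖_{M,N} ≤ ‖a‖_{M+N,N}. -/

import Mathlib

open scoped ENNReal ComplexConjugate InnerProductSpace

noncomputable section

abbrev H : Type := lp (fun _ : ℕ => ℂ) 2

/-- The standard orthonormal basis vectors of `ℓ²(ℕ)`. -/
def e (k : ℕ) : H := lp.single 2 k 1

/-- Matrix coefficients of a bounded operator. -/
def matA (a : H →L[ℂ] H) (k l : ℕ) : ℂ := ⟪e k, a (e l)⟫_ℂ

/-- Operator norm (possibly infinite) of a matrix, as the sup of bilinear pairings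
against finitely supported vectors of norm at most one. -/
def opNormE (A : ℕ → ℕ → ℂ) : ℝ≥0∞ :=
  ⨆ (x : ℕ →₀ ℂ) (y : ℕ →₀ ℂ)
    (_ : ∑ l ∈ x.support, ‖x l‖ ^ 2 ≤ 1)
    (_ : ∑ k ∈ y.support, ‖y k‖ ^ 2 ≤ 1),
    ENNReal.ofReal ‖∑ k ∈ y.support, ∑ l ∈ x.support, conj (y k) * A k l * x l‖

/-- Hilbert-Schmidt norm (possibly infinite) of a matrix. -/
def hsNormE (A : ℕ → ℕ → ℂ) : ℝ≥0∞ :=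
  (∑' k : ℕ, ∑' l : ℕ, (‖A k l‖₊ : ℝ≥0∞) ^ 2) ^ ((1 : ℝ) / 2)

/-- The matrix of `a * (I + K)^N`, where `K` is the label operator `K E_k = k E_k`. -/
def wt (N : ℕ) (A : ℕ → ℕ → ℂ) : ℕ → ℕ → ℂ := fun k l => (1 + (l : ℂ)) ^ N * A k l

/-- `‖a‖_{0,N} = ‖a (I+K)^N‖`. -/
def norm0N (A : ℕ → ℕ → ℂ) (N : ℕ) : ℝ≥0∞ := opNormE (wt N A)

/-- The matrix of `δ_K(a) = [K, a]`. -/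
def deltaK (A : ℕ → ℕ → ℂ) : ℕ → ℕ → ℂ := fun k l => ((k : ℂ) - (l : ℂ)) * A k l

/-- `‖a‖_{M,N} = ∑_{j=0}^M C(M,j) ‖δ_K^j(a)‖_{0,N}`. -/
def normMN (A : ℕ → ℕ → ℂ) (M N : ℕ) : ℝ≥0∞ :=
  ∑ j ∈ Finset.range (M + 1), (Nat.choose M j : ℝ≥0∞) * norm0N (deltaK^[j] A) N

/-- Rapid decay of a matrix: the smooth compact operators `K^∞` are the operators
whose matrix has this property. -/
def IsRD (A : ℕ → ℕ → ℂ) : Prop :=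
  ∀ M N : ℕ, ∃ C : ℝ, ∀ k l : ℕ, (1 + (k : ℝ)) ^ M * (1 + (l : ℝ)) ^ N * ‖A k l‖ ≤ C

/-! ### Auxiliary lemmas -/

def pairS (A : ℕ → ℕ → ℂ) (x y : ℕ →₀ ℂ) : ℂ :=
  ∑ k ∈ y.support, ∑ l ∈ x.support, conj (y k) * A k l * x l

lemma le_opNormE (A : ℕ → ℕ → ℂ) (x y : ℕ →₀ ℂ)
    (hx : ∑ l ∈ x.support, ‖x l‖ ^ 2 ≤ 1) (hy : ∑ k ∈ y.support, ‖y k‖ ^ 2 ≤ 1) :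
    ENNReal.ofReal ‖pairS A x y‖ ≤ opNormE A := by
  exact le_iSup_of_le x (le_iSup_of_le y (le_iSup_of_le hx (le_iSup_of_le hy le_rfl)))

lemma opNormE_le {A : ℕ → ℕ → ℂ} {C : ℝ≥0∞}
    (h : ∀ x y : ℕ →₀ ℂ, (∑ l ∈ x.support, ‖x l‖ ^ 2 ≤ 1) →
      (∑ k ∈ y.support, ‖y k‖ ^ 2 ≤ 1) → ENNReal.ofReal ‖pairS A x y‖ ≤ C) :
    opNormE A ≤ C :=
  iSup_le fun x => iSup_le fun y => iSup_le fun hx => iSup_le fun hy => h x y hx hy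

/-- transpose-conjugate -/
lemma opNormE_conjT_le (A : ℕ → ℕ → ℂ) :
    opNormE (fun k l => conj (A l k)) ≤ opNormE A := by
  refine opNormE_le fun x y hx hy => ?_
  have : pairS (fun k l => conj (A l k)) x y = conj (pairS A y x) := by
    unfold pairS
    rw [Finset.sum_comm, map_sum]
    refine Finset.sum_congr rfl fun l _ => ?_
    rw [map_sum]
    refine Finset.sum_congr rfl fun k _ => ?_
    simp only [map_mul, RingHomCompTriple.comp_apply, RingHom.id_apply, starRingEnd_self_apply]
    ring
  rw [this, RCLike.norm_conj]
  exact le_opNormE A y x hy hx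

/-- scalar multiple -/
lemma opNormE_const_mul_le (c : ℂ) (A : ℕ → ℕ → ℂ) :
    opNormE (fun k l => c * A k l) ≤ ENNReal.ofReal ‖c‖ * opNormE A := by
  refine opNormE_le fun x y hx hy => ?_
  have : pairS (fun k l => c * A k l) x y = c * pairS A x y := by
    unfold pairS
    rw [Finset.mul_sum]
    refine Finset.sum_congr rfl fun k _ => ?_
    rw [Finset.mul_sum]
    exact Finset.sum_congr rfl fun l _ => by ring
  rw [this, norm_mul, ENNReal.ofReal_mul (norm_nonneg c)]
  exact mul_le_mul_right (le_opNormE A x y hx hy) _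

/-- subadditivity (binary) -/
lemma opNormE_add_le (A B : ℕ → ℕ → ℂ) :
    opNormE (fun k l => A k l + B k l) ≤ opNormE A + opNormE B := by
  refine opNormE_le fun x y hx hy => ?_
  have : pairS (fun k l => A k l + B k l) x y = pairS A x y + pairS B x y := by
    unfold pairS
    rw [← Finset.sum_add_distrib]
    refine Finset.sum_congr rfl fun k _ => ?_
    rw [← Finset.sum_add_distrib]
    exact Finset.sum_congr rfl fun l _ => by ring
  calc ENNReal.ofReal ‖pairS (fun k l => A k l + B k l) x y‖
      ≤ ENNReal.ofReal (‖pairS A x y‖ + ‖pairS B x y‖) := by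
        rw [this]; exact ENNReal.ofReal_le_ofReal (norm_add_le _ _)
    _ ≤ opNormE A + opNormE B := by
        rw [ENNReal.ofReal_add (norm_nonneg _) (norm_nonneg _)]
        exact add_le_add (le_opNormE A x y hx hy) (le_opNormE B x y hx hy)

lemma opNormE_sum_le {ι : Type*} (s : Finset ι) (F : ι → ℕ → ℕ → ℂ) :
    opNormE (fun k l => ∑ i ∈ s, F i k l) ≤ ∑ i ∈ s, opNormE (F i) := by
  classical
  induction s using Finset.induction_on with
  | empty =>
      simp only [Finset.sum_empty]
      refine opNormE_le fun x y hx hy => ?_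
      simp [pairS]
  | insert _ _ hn ih =>
      rename_i i s
      simp only [Finset.sum_insert hn]
      exact le_trans (opNormE_add_le _ _) (add_le_add le_rfl ih)

/-- column damping -/
lemma opNormE_colmul_le (w : ℕ → ℂ) (hw : ∀ l, ‖w l‖ ≤ 1) (A : ℕ → ℕ → ℂ) :
    opNormE (fun k l => w l * A k l) ≤ opNormE A := by
  refine opNormE_le fun x y hx hy => ?_
  set x' : ℕ →₀ ℂ := Finsupp.onFinset x.support (fun l => w l * x l)
    (fun l h => Finsupp.mem_support_iff.2 (right_ne_zero_of_mul h)) with hx'def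
  have hsub : x'.support ⊆ x.support := Finsupp.support_onFinset_subset
  have hx'val : ∀ l, x' l = w l * x l := fun l => rfl
  have hx'norm : ∑ l ∈ x'.support, ‖x' l‖ ^ 2 ≤ 1 := by
    refine le_trans (Finset.sum_le_sum_of_subset_of_nonneg hsub
      (fun l _ _ => by positivity)) (le_trans (Finset.sum_le_sum fun l _ => ?_) hx)
    rw [hx'val, norm_mul]
    have h1 : ‖w l‖ * ‖x l‖ ≤ 1 * ‖x l‖ := mul_le_mul_of_nonneg_right (hw l) (norm_nonneg _)
    rw [one_mul] at h1
    exact pow_le_pow_left₀ (by positivity) h1 2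
  have : pairS (fun k l => w l * A k l) x y = pairS A x' y := by
    unfold pairS
    refine Finset.sum_congr rfl fun k _ => ?_
    rw [Finset.sum_subset hsub]
    · exact Finset.sum_congr rfl fun l _ => by rw [hx'val]; ring
    · intro l _ hl
      rw [Finsupp.notMem_support_iff.1 hl, mul_zero]
  rw [this]
  exact le_opNormE A x' y hx'norm hy

lemma deltaK_iter (A : ℕ → ℕ → ℂ) (j : ℕ) :
    deltaK^[j] A = fun (k l : ℕ) => ((k : ℂ) - (l : ℂ)) ^ j * A k l := by
  induction j with
  | zero => simp
  | succ j ih =>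
      rw [Function.iterate_succ_apply', ih]
      funext k l
      simp only [deltaK, pow_succ]
      ring

lemma norm_one_add_natCast (l : ℕ) : ‖(1 : ℂ) + (l : ℂ)‖ = 1 + (l : ℝ) := by
  have : (1 : ℂ) + (l : ℂ) = (((1 + l : ℝ)) : ℂ) := by push_cast; ring
  rw [this, Complex.norm_real, Real.norm_eq_abs, abs_of_nonneg (by positivity)]

lemma one_add_natCast_ne_zero (l : ℕ) : (1 : ℂ) + (l : ℂ) ≠ 0 := by
  intro h
  have := norm_one_add_natCast l
  rw [h, norm_zero] at this
  nlinarith [Nat.cast_nonneg (α := ℝ) l]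

/-- Step 1: the key `M = 0` estimate. -/
lemma step1 (A : ℕ → ℕ → ℂ) (N j : ℕ) :
    norm0N (deltaK^[j] (fun k l => conj (A l k))) N ≤
      ∑ i ∈ Finset.range (N + 1), (Nat.choose N i : ℝ≥0∞) * norm0N (deltaK^[i + j] A) N := by
  -- the weighted matrix of δ^j(a*) is the conjugate transpose of G
  set G : ℕ → ℕ → ℂ := fun (k l : ℕ) => (1 + (k : ℂ)) ^ N * (((l : ℂ) - (k : ℂ)) ^ j * A k l)
    with hG
  have h1 : wt N (deltaK^[j] (fun k l => conj (A l k))) = fun k l => conj (G l k) := by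
    funext k l
    rw [deltaK_iter]
    simp only [wt, hG, map_mul, map_pow, map_sub, map_add, map_one, Complex.conj_natCast]
  have h2 : norm0N (deltaK^[j] (fun k l => conj (A l k))) N ≤ opNormE G := by
    rw [norm0N, h1]; exact opNormE_conjT_le G
  -- pull out the sign (-1)^j
  have h3 : G = fun (k l : ℕ) => ((-1 : ℂ)) ^ j * ((1 + (k : ℂ)) ^ N * (deltaK^[j] A) k l) := by
    funext k l
    rw [deltaK_iter]
    simp only [hG]
    rw [show ((l : ℂ) - (k : ℂ)) = -((k : ℂ) - (l : ℂ)) by ring, neg_pow]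
    ring
  have h4 : opNormE G ≤ opNormE (fun (k l : ℕ) => (1 + (k : ℂ)) ^ N * (deltaK^[j] A) k l) := by
    rw [h3]
    refine le_trans (opNormE_const_mul_le _ _) ?_
    simp [norm_pow]
  -- binomial expansion of the left weight
  have h5 : (fun (k l : ℕ) => (1 + (k : ℂ)) ^ N * (deltaK^[j] A) k l) =
      fun (k l : ℕ) => ∑ i ∈ Finset.range (N + 1),
        (((k : ℂ) - (l : ℂ)) ^ i * (1 + (l : ℂ)) ^ (N - i) * (N.choose i : ℂ))
          * (deltaK^[j] A) k l := by
    funext k l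
    rw [← Finset.sum_mul]
    congr 1
    rw [← add_pow]
    congr 1
    ring
  refine le_trans h2 (le_trans h4 ?_)
  rw [h5]
  refine le_trans (opNormE_sum_le _ _) (Finset.sum_le_sum fun i hi => ?_)
  have hiN : i ≤ N := Nat.lt_succ_iff.1 (Finset.mem_range.1 hi)
  -- rewrite the i-th summand
  have h6 : (fun (k l : ℕ) => (((k : ℂ) - (l : ℂ)) ^ i * (1 + (l : ℂ)) ^ (N - i) * (N.choose i : ℂ))
        * (deltaK^[j] A) k l) =
      fun (k l : ℕ) => (N.choose i : ℂ) *
        ((((1 + (l : ℂ)) ^ i)⁻¹) * wt N (deltaK^[i + j] A) k l) := by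
    funext k l
    rw [deltaK_iter, deltaK_iter]
    simp only [wt]
    have hne : ((1 : ℂ) + (l : ℂ)) ^ i ≠ 0 := pow_ne_zero _ (one_add_natCast_ne_zero l)
    field_simp
    rw [show N = i + (N - i) by omega]
    rw [pow_add ((1 : ℂ) + (l : ℂ)) i (N - i), pow_add (((k : ℂ) - (l : ℂ))) i j]
    ring_nf
    rw [show i + (N - i) - i = N - i by omega]
  rw [h6]
  refine le_trans (opNormE_const_mul_le _ _) ?_
  have hc : ENNReal.ofReal ‖((N.choose i : ℕ) : ℂ)‖ = ((N.choose i : ℕ) : ℝ≥0∞) := by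
    rw [Complex.norm_natCast, ENNReal.ofReal_natCast]
  rw [hc]
  refine mul_le_mul_right ?_ _
  refine opNormE_colmul_le _ (fun l => ?_) _
  rw [norm_inv, norm_pow, norm_one_add_natCast]
  refine inv_le_one_of_one_le₀ (one_le_pow₀ ?_)
  nlinarith [Nat.cast_nonneg (α := ℝ) l]

/-- Step 2: Vandermonde rearrangement. -/
lemma comb (T : ℕ → ℝ≥0∞) (M N : ℕ) :
    ∑ j ∈ Finset.range (M + 1), (M.choose j : ℝ≥0∞) *
        ∑ i ∈ Finset.range (N + 1), (N.choose i : ℝ≥0∞) * T (i + j)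
      ≤ ∑ m ∈ Finset.range (M + N + 1), ((M + N).choose m : ℝ≥0∞) * T m := by
  classical
  set s : Finset (ℕ × ℕ) := Finset.range (M + 1) ×ˢ Finset.range (N + 1) with hs
  have hL : ∑ j ∈ Finset.range (M + 1), (M.choose j : ℝ≥0∞) *
        ∑ i ∈ Finset.range (N + 1), (N.choose i : ℝ≥0∞) * T (i + j)
      = ∑ p ∈ s, ((M.choose p.1 : ℝ≥0∞) * (N.choose p.2 : ℝ≥0∞)) * T (p.2 + p.1) := by
    rw [Finset.sum_product]
    refine Finset.sum_congr rfl fun j _ => ?_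
    rw [Finset.mul_sum]
    refine Finset.sum_congr rfl fun i _ => by ring
  rw [hL]
  have hmap : ∀ p ∈ s, p.1 + p.2 ∈ Finset.range (M + N + 1) := by
    intro p hp
    rw [hs, Finset.mem_product, Finset.mem_range, Finset.mem_range] at hp
    rw [Finset.mem_range]
    omega
  rw [← Finset.sum_fiberwise_of_maps_to hmap]
  refine Finset.sum_le_sum fun m _ => ?_
  have h1 : ∑ p ∈ s.filter (fun p => p.1 + p.2 = m),
        ((M.choose p.1 : ℝ≥0∞) * (N.choose p.2 : ℝ≥0∞)) * T (p.2 + p.1)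
      = (((∑ p ∈ s.filter (fun p => p.1 + p.2 = m),
          M.choose p.1 * N.choose p.2 : ℕ)) : ℝ≥0∞) * T m := by
    rw [Nat.cast_sum, Finset.sum_mul]
    refine Finset.sum_congr rfl fun p hp => ?_
    have hpm : p.1 + p.2 = m := (Finset.mem_filter.1 hp).2
    rw [show p.2 + p.1 = m by omega, Nat.cast_mul]
  rw [h1]
  refine mul_le_mul_left (le_of_eq ?_) _
  congr 1
  rw [Nat.add_choose_eq]
  refine Finset.sum_subset ?_ ?_
  · intro p hp
    rw [Finset.mem_filter] at hp
    rw [Finset.HasAntidiagonal.mem_antidiagonal]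
    exact hp.2
  · intro p hp hp2
    rw [Finset.HasAntidiagonal.mem_antidiagonal] at hp
    have hps : p ∉ s := by
      intro hmem
      exact hp2 (Finset.mem_filter.2 ⟨hmem, hp⟩)
    rw [hs, Finset.mem_product, Finset.mem_range, Finset.mem_range] at hps
    push_neg at hps
    rcases Nat.lt_or_ge M p.1 with h | h
    · rw [Nat.choose_eq_zero_of_lt h, zero_mul]
    · have : N < p.2 := by
        have := hps (by omega)
        omega
      rw [Nat.choose_eq_zero_of_lt this, mul_zero]

lemma matA_adjoint (a : H →L[ℂ] H) :
    matA (ContinuousLinearMap.adjoint a) = fun k l => conj (matA a l k) := by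
  funext k l
  rw [matA, matA, ContinuousLinearMap.adjoint_inner_right]
  exact (inner_conj_symm _ _).symm

/-- The adjoint satisfies `‖a*‖_{M,N} ≤ ‖a‖_{M+N,N}`. -/
theorem stmt5 (a : H →L[ℂ] H) (M N : ℕ) :
    normMN (matA (ContinuousLinearMap.adjoint a)) M N ≤ normMN (matA a) (M + N) N := by
  rw [normMN, normMN, matA_adjoint]
  refine le_trans (Finset.sum_le_sum fun j _ =>
    mul_le_mul_right (step1 (matA a) N j) _) ?_
  exact comb (fun m => norm0N (deltaK^[m] (matA a)) N) M N

end
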